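/- Let R be a Noetherian F-finite commutative ring of characteristic p, let (M,C) be an F-pure q-Cartier module over R and let f ∈ R. Assume that the pair (M,f) satisfies the boundedness assumption. Then: (1) every F-jumping exponent t ∈ FJN(M,f) is a rational number; (2) for every real T ≥ 0 the set FJN(M,f) ∩ [0,T] is finite (so FJN(M,f) ∪ {0} is a discrete subset of ℝ). -/

import Mathlib

open Pointwise Function

/-- The set of ν-invariants of level `m`. -/
def nuLevel {R M : Type*} [CommRing R] [AddCommGroup M] [Module R M]
    (C : M → M) (f : R) (N : Set M) (m : ℕ) : Set ℕ :=
  {n | C^[m] '' (f ^ n • N) ≠ C^[m] '' (f ^ (n + 1) • N)}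

/-- The test module `τ(M, f^t) = ⋃_{m ≥ 0} C^m (f^{⌈t q^m⌉} M)`. -/
def testSet {R M : Type*} [CommRing R] [AddCommGroup M] [Module R M]
    (C : M → M) (q : ℕ) (f : R) (t : ℝ) : Set M :=
  ⋃ m : ℕ, C^[m] '' ((f ^ ⌈t * (q : ℝ) ^ m⌉₊) • (Set.univ : Set M))

/-- The set `FJN⁺(M, f)` of right F-jumping exponents. -/
def FJNplus {R M : Type*} [CommRing R] [AddCommGroup M] [Module R M]
    (C : M → M) (q : ℕ) (f : R) : Set ℝ :=
  {t | 0 ≤ t ∧ ∀ ε : ℝ, 0 < ε → testSet C q f (t + ε) ⊂ testSet C q f t}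

/-- The set `FJN⁻(M, f)` of left F-jumping exponents. -/
def FJNminus {R M : Type*} [CommRing R] [AddCommGroup M] [Module R M]
    (C : M → M) (q : ℕ) (f : R) : Set ℝ :=
  {t | 0 < t ∧ ∀ ε : ℝ, 0 < ε → ε < t → testSet C q f t ⊂ testSet C q f (t - ε)}

namespace FJNAux

variable {R M : Type*} [CommRing R] [AddCommGroup M] [Module R M]
variable (C : M → M) (f : R) (q : ℕ)

/-- `C^m(f^n M)` as a set. -/
def NNs (m n : ℕ) : Set M := C^[m] '' (f ^ n • (Set.univ : Set M))

lemma mem_NNs {m n : ℕ} {z : M} : z ∈ NNs C f m n ↔ ∃ y : M, C^[m] (f ^ n • y) = z := by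
  simp only [NNs, Set.mem_image, Set.mem_smul_set, Set.mem_univ, true_and]
  constructor
  · rintro ⟨w, ⟨y, rfl⟩, rfl⟩; exact ⟨y, rfl⟩
  · rintro ⟨y, rfl⟩; exact ⟨f ^ n • y, ⟨y, rfl⟩, rfl⟩

lemma C_zero (hCadd : ∀ x y : M, C (x + y) = C x + C y) : C 0 = 0 := by
  have h := hCadd 0 0
  rw [add_zero] at h
  exact (add_eq_left.mp h.symm)

lemma iter_add (hCadd : ∀ x y : M, C (x + y) = C x + C y) (m : ℕ) (x y : M) :
    C^[m] (x + y) = C^[m] x + C^[m] y := by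
  induction m generalizing x y with
  | zero => simp
  | succ m ih => rw [Function.iterate_succ_apply, Function.iterate_succ_apply,
      Function.iterate_succ_apply, hCadd, ih]

lemma iter_zero (hCadd : ∀ x y : M, C (x + y) = C x + C y) (m : ℕ) : C^[m] (0 : M) = 0 := by
  induction m with
  | zero => simp
  | succ m ih => rw [Function.iterate_succ_apply, C_zero C hCadd, ih]

lemma iter_sl (hCsl : ∀ (a : R) (x : M), C (a ^ q • x) = a • C x) (m : ℕ) (a : R) (x : M) :
    C^[m] (a ^ q ^ m • x) = a • C^[m] x := by
  induction m generalizing x with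
  | zero => simp
  | succ m ih =>
    rw [Function.iterate_succ_apply, Function.iterate_succ_apply]
    rw [pow_succ, pow_mul, hCsl, ih]

lemma NN_anti {m n n' : ℕ} (h : n ≤ n') : NNs C f m n' ⊆ NNs C f m n := by
  intro z hz
  obtain ⟨y, rfl⟩ := (mem_NNs C f).mp hz
  refine (mem_NNs C f).mpr ⟨f ^ (n' - n) • y, ?_⟩
  rw [smul_smul, ← pow_add, Nat.add_sub_cancel' h]

lemma NN_step (hCsl : ∀ (a : R) (x : M), C (a ^ q • x) = a • C x)
    (hsurj : Function.Surjective C) (m n : ℕ) :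
    NNs C f (m + 1) (q * n) = NNs C f m n := by
  have key : ∀ y : M, C (f ^ (q * n) • y) = f ^ n • C y := by
    intro y
    rw [show f ^ (q * n) = (f ^ n) ^ q by rw [← pow_mul, mul_comm], hCsl]
  ext z
  rw [mem_NNs, mem_NNs]
  constructor
  · rintro ⟨y, rfl⟩
    exact ⟨C y, by rw [Function.iterate_succ_apply, key]⟩
  · rintro ⟨w, rfl⟩
    obtain ⟨y, rfl⟩ := hsurj w
    exact ⟨y, by rw [Function.iterate_succ_apply, key]⟩

lemma iter_skoda (hCsl : ∀ (a : R) (x : M), C (a ^ q • x) = a • C x) (m : ℕ) (x : M) :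
    C^[m] (f ^ q ^ m • x) = f • C^[m] x := iter_sl C q hCsl m f x

lemma NN_skoda (hCsl : ∀ (a : R) (x : M), C (a ^ q • x) = a • C x) (m n : ℕ) :
    NNs C f m (n + q ^ m) = f • NNs C f m n := by
  ext z
  constructor
  · intro hz
    obtain ⟨y, rfl⟩ := (mem_NNs C f).mp hz
    have : C^[m] (f ^ (n + q ^ m) • y) = f • C^[m] (f ^ n • y) := by
      rw [pow_add, mul_comm, mul_smul, iter_skoda C f q hCsl]
    rw [this]
    exact Set.smul_mem_smul_set ((mem_NNs C f).mpr ⟨y, rfl⟩)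
  · rintro ⟨w, hw, rfl⟩
    obtain ⟨y, rfl⟩ := (mem_NNs C f).mp hw
    refine (mem_NNs C f).mpr ⟨y, ?_⟩
    rw [pow_add, mul_comm, mul_smul, iter_skoda C f q hCsl]

/-- `C^m(f^n M)` as a submodule. -/
def NNsub (hCadd : ∀ x y : M, C (x + y) = C x + C y)
    (hCsl : ∀ (a : R) (x : M), C (a ^ q • x) = a • C x) (m n : ℕ) : Submodule R M where
  carrier := NNs C f m n
  add_mem' := by
    intro a b ha hb
    obtain ⟨y, rfl⟩ := (mem_NNs C f).mp ha
    obtain ⟨y', rfl⟩ := (mem_NNs C f).mp hb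
    exact (mem_NNs C f).mpr ⟨y + y', by rw [smul_add, iter_add C hCadd]⟩
  zero_mem' := (mem_NNs C f).mpr ⟨0, by rw [smul_zero, iter_zero C hCadd]⟩
  smul_mem' := by
    intro c z hz
    obtain ⟨y, rfl⟩ := (mem_NNs C f).mp hz
    refine (mem_NNs C f).mpr ⟨c ^ q ^ m • y, ?_⟩
    rw [smul_comm, iter_sl C q hCsl]

lemma NN_chain (hCsl : ∀ (a : R) (x : M), C (a ^ q • x) = a • C x)
    (hsurj : Function.Surjective C) (t : ℝ) (m : ℕ) :
    NNs C f m ⌈t * (q : ℝ) ^ m⌉₊ ⊆ NNs C f (m + 1) ⌈t * (q : ℝ) ^ (m + 1)⌉₊ := by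
  have h1 : ⌈t * (q : ℝ) ^ (m + 1)⌉₊ ≤ q * ⌈t * (q : ℝ) ^ m⌉₊ := by
    rw [Nat.ceil_le]
    push_cast
    calc t * (q : ℝ) ^ (m + 1) = (t * (q : ℝ) ^ m) * q := by ring
    _ ≤ (⌈t * (q : ℝ) ^ m⌉₊ : ℝ) * q :=
        mul_le_mul_of_nonneg_right (Nat.le_ceil _) (by positivity)
    _ = (q : ℝ) * ⌈t * (q : ℝ) ^ m⌉₊ := by ring
  calc NNs C f m ⌈t * (q : ℝ) ^ m⌉₊ = NNs C f (m + 1) (q * ⌈t * (q : ℝ) ^ m⌉₊) :=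
        (NN_step C f q hCsl hsurj m _).symm
  _ ⊆ NNs C f (m + 1) ⌈t * (q : ℝ) ^ (m + 1)⌉₊ := NN_anti C f h1

lemma NN_chain_le (hCsl : ∀ (a : R) (x : M), C (a ^ q • x) = a • C x)
    (hsurj : Function.Surjective C) (t : ℝ) {k m : ℕ} (h : k ≤ m) :
    NNs C f k ⌈t * (q : ℝ) ^ k⌉₊ ⊆ NNs C f m ⌈t * (q : ℝ) ^ m⌉₊ := by
  induction m, h using Nat.le_induction with
  | base => exact subset_rfl
  | succ m hm ih => exact ih.trans (NN_chain C f q hCsl hsurj t m)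

lemma testSet_def (t : ℝ) :
    (⋃ m : ℕ, C^[m] '' ((f ^ ⌈t * (q : ℝ) ^ m⌉₊) • (Set.univ : Set M)))
      = ⋃ m : ℕ, NNs C f m ⌈t * (q : ℝ) ^ m⌉₊ := rfl

lemma testSet_stab [IsNoetherianRing R] [Module.Finite R M]
    (hCadd : ∀ x y : M, C (x + y) = C x + C y)
    (hCsl : ∀ (a : R) (x : M), C (a ^ q • x) = a • C x)
    (hsurj : Function.Surjective C) (t : ℝ) :
    ∃ m₁ : ℕ, ∀ m, m₁ ≤ m →
      (⋃ k : ℕ, NNs C f k ⌈t * (q : ℝ) ^ k⌉₊) = NNs C f m ⌈t * (q : ℝ) ^ m⌉₊ := by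
  set g : ℕ →o Submodule R M :=
    ⟨fun m => NNsub C f q hCadd hCsl m ⌈t * (q : ℝ) ^ m⌉₊,
     monotone_nat_of_le_succ (fun m x hx => NN_chain C f q hCsl hsurj t m hx)⟩
  obtain ⟨m₁, hm₁⟩ := monotone_stabilizes_iff_noetherian.mpr inferInstance g
  refine ⟨m₁, fun m hm => ?_⟩
  apply Set.Subset.antisymm
  · apply Set.iUnion_subset
    intro k
    rcases le_total k m with h | h
    · exact NN_chain_le C f q hCsl hsurj t h
    · have hg : g m = g k := (hm₁ m hm).symm.trans (hm₁ k (hm.trans h))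
      have : (g k : Set M) = (g m : Set M) := by rw [hg]
      exact this.subset
  · exact Set.subset_iUnion (fun k => NNs C f k ⌈t * (q : ℝ) ^ k⌉₊) m

lemma NN_eq_of_flat {m lo hi : ℕ} (h : lo ≤ hi)
    (hflat : ∀ j, lo ≤ j → j < hi → NNs C f m j = NNs C f m (j + 1)) :
    NNs C f m lo = NNs C f m hi := by
  induction hi, h using Nat.le_induction with
  | base => rfl
  | succ hi hh ih =>
    rw [ih (fun j hj hj' => hflat j hj (by omega)), hflat hi hh (by omega)]

lemma jump_exists [IsNoetherianRing R] [Module.Finite R M]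
    (hCadd : ∀ x y : M, C (x + y) = C x + C y)
    (hCsl : ∀ (a : R) (x : M), C (a ^ q • x) = a • C x)
    (hsurj : Function.Surjective C) {a b : ℝ} (hab : a ≤ b)
    (hne : (⋃ k : ℕ, NNs C f k ⌈b * (q : ℝ) ^ k⌉₊) ≠ ⋃ k : ℕ, NNs C f k ⌈a * (q : ℝ) ^ k⌉₊) :
    ∃ m₀, 1 ≤ m₀ ∧ ∀ m, m₀ ≤ m → ∃ n, ⌈a * (q : ℝ) ^ m⌉₊ ≤ n ∧ n < ⌈b * (q : ℝ) ^ m⌉₊ ∧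
      NNs C f m n ≠ NNs C f m (n + 1) := by
  obtain ⟨ma, hma⟩ := testSet_stab C f q hCadd hCsl hsurj a
  obtain ⟨mb, hmb⟩ := testSet_stab C f q hCadd hCsl hsurj b
  refine ⟨max 1 (max ma mb), le_max_left _ _, fun m hm => ?_⟩
  have hma' := hma m (le_trans (le_trans (le_max_left ma mb) (le_max_right 1 _)) hm)
  have hmb' := hmb m (le_trans (le_trans (le_max_right ma mb) (le_max_right 1 _)) hm)
  by_contra hno
  push_neg at hno
  have hceil : ⌈a * (q : ℝ) ^ m⌉₊ ≤ ⌈b * (q : ℝ) ^ m⌉₊ :=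
    Nat.ceil_mono (mul_le_mul_of_nonneg_right hab (by positivity))
  exact hne (by rw [hma', hmb', NN_eq_of_flat C f hceil hno])

lemma nu_flat_up (hCsl : ∀ (a : R) (x : M), C (a ^ q • x) = a • C x) (m : ℕ) (k : ℕ) (n : ℕ)
    (h : NNs C f m n = NNs C f m (n + 1)) :
    NNs C f m (n + k * q ^ m) = NNs C f m (n + k * q ^ m + 1) := by
  induction k with
  | zero => simpa using h
  | succ k ih =>
    calc NNs C f m (n + (k + 1) * q ^ m) = f • NNs C f m (n + k * q ^ m) := by
          rw [show n + (k + 1) * q ^ m = (n + k * q ^ m) + q ^ m from by ring,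
            NN_skoda C f q hCsl]
    _ = f • NNs C f m (n + k * q ^ m + 1) := by rw [ih]
    _ = NNs C f m (n + (k + 1) * q ^ m + 1) := by
          rw [show n + (k + 1) * q ^ m + 1 = (n + k * q ^ m + 1) + q ^ m from by ring,
            NN_skoda C f q hCsl]

lemma nu_count (hCsl : ∀ (a : R) (x : M), C (a ^ q • x) = a • C x) (m L : ℕ)
    (hL : {n : ℕ | n < q ^ m ∧ NNs C f m n ≠ NNs C f m (n + 1)}.ncard ≤ L) (K : ℕ) :
    {n : ℕ | n < K * q ^ m ∧ NNs C f m n ≠ NNs C f m (n + 1)}.ncard ≤ K * L := by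
  induction K with
  | zero =>
    have : {n : ℕ | n < 0 * q ^ m ∧ NNs C f m n ≠ NNs C f m (n + 1)} = ∅ := by
      ext n; simp
    rw [this, Set.ncard_empty]
    simp
  | succ K ih =>
    have hbase_fin : {n : ℕ | n < q ^ m ∧ NNs C f m n ≠ NNs C f m (n + 1)}.Finite :=
      (Set.finite_Iio _).subset (fun x hx => hx.1)
    have hK_fin : {n : ℕ | n < K * q ^ m ∧ NNs C f m n ≠ NNs C f m (n + 1)}.Finite :=
      (Set.finite_Iio _).subset (fun x hx => hx.1)
    have hsub : {n : ℕ | n < (K + 1) * q ^ m ∧ NNs C f m n ≠ NNs C f m (n + 1)} ⊆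
        {n : ℕ | n < K * q ^ m ∧ NNs C f m n ≠ NNs C f m (n + 1)} ∪
        ((· + K * q ^ m) '' {n : ℕ | n < q ^ m ∧ NNs C f m n ≠ NNs C f m (n + 1)}) := by
      rintro n ⟨hn, hν⟩
      have hexp : (K + 1) * q ^ m = K * q ^ m + q ^ m := by ring
      by_cases h : n < K * q ^ m
      · exact Or.inl ⟨h, hν⟩
      · refine Or.inr ⟨n - K * q ^ m, ⟨by omega, fun heq => hν ?_⟩,
          show n - K * q ^ m + K * q ^ m = n from by omega⟩
        have := nu_flat_up C f q hCsl m K (n - K * q ^ m) heq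
        rwa [show n - K * q ^ m + K * q ^ m = n from by omega] at this
    calc {n : ℕ | n < (K + 1) * q ^ m ∧ NNs C f m n ≠ NNs C f m (n + 1)}.ncard
        ≤ ({n : ℕ | n < K * q ^ m ∧ NNs C f m n ≠ NNs C f m (n + 1)} ∪
          ((· + K * q ^ m) '' {n : ℕ | n < q ^ m ∧ NNs C f m n ≠ NNs C f m (n + 1)})).ncard :=
          Set.ncard_le_ncard hsub (hK_fin.union (hbase_fin.image _))
    _ ≤ {n : ℕ | n < K * q ^ m ∧ NNs C f m n ≠ NNs C f m (n + 1)}.ncard +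
          ((· + K * q ^ m) '' {n : ℕ | n < q ^ m ∧ NNs C f m n ≠ NNs C f m (n + 1)}).ncard :=
          Set.ncard_union_le _ _
    _ ≤ K * L + L :=
        Nat.add_le_add ih (le_trans (Set.ncard_image_le hbase_fin) hL)
    _ = (K + 1) * L := by ring

end FJNAux

namespace FJNAux
variable {R M : Type*} [CommRing R] [AddCommGroup M] [Module R M]
variable (C : M → M) (f : R) (q : ℕ)

lemma testSet_eq (t : ℝ) : testSet C q f t = ⋃ m : ℕ, NNs C f m ⌈t * (q : ℝ) ^ m⌉₊ := rfl

lemma testSet_anti {a b : ℝ} (hab : a ≤ b) : testSet C q f b ⊆ testSet C q f a := by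
  rw [testSet_eq, testSet_eq]
  exact Set.iUnion_mono fun m =>
    NN_anti C f (Nat.ceil_mono (mul_le_mul_of_nonneg_right hab (by positivity)))

lemma testSet_eq_of_not_ssubset {a b : ℝ} (hab : a ≤ b)
    (h : ¬ testSet C q f b ⊂ testSet C q f a) : testSet C q f b = testSet C q f a := by
  by_contra hne
  exact h (Set.ssubset_iff_subset_ne.mpr ⟨testSet_anti C f q hab, hne⟩)

lemma ceil_shift (t : ℝ) (ht : 0 ≤ t) (m : ℕ) :
    ⌈(t + 1) * (q : ℝ) ^ m⌉₊ = ⌈t * (q : ℝ) ^ m⌉₊ + q ^ m := by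
  rw [add_mul, one_mul, ← Nat.cast_pow, Nat.ceil_add_natCast (by positivity)]

lemma tau_add_one (hCsl : ∀ (a : R) (x : M), C (a ^ q • x) = a • C x)
    {t : ℝ} (ht : 0 ≤ t) : testSet C q f (t + 1) = f • testSet C q f t := by
  rw [testSet_eq, testSet_eq, Set.smul_set_iUnion]
  exact Set.iUnion_congr fun m => by
    rw [ceil_shift q t ht m, NN_skoda C f q hCsl]

lemma tau_q_image (hCsl : ∀ (a : R) (x : M), C (a ^ q • x) = a • C x)
    (hsurj : Function.Surjective C) {t : ℝ} (ht : 0 ≤ t) :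
    C '' testSet C q f ((q : ℝ) * t) = testSet C q f t := by
  have himg : ∀ m n, C '' NNs C f m n = NNs C f (m + 1) n := by
    intro m n
    unfold NNs
    rw [← Set.image_comp, ← Function.iterate_succ']
  have harg : ∀ m : ℕ, (q : ℝ) * t * (q : ℝ) ^ m = t * (q : ℝ) ^ (m + 1) := fun m => by ring
  rw [testSet_eq, Set.image_iUnion]
  have h1 : (⋃ m : ℕ, C '' NNs C f m ⌈(q : ℝ) * t * (q : ℝ) ^ m⌉₊)
      = ⋃ m : ℕ, NNs C f (m + 1) ⌈t * (q : ℝ) ^ (m + 1)⌉₊ :=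
    Set.iUnion_congr fun m => by rw [himg, harg]
  rw [h1, testSet_eq]
  apply Set.Subset.antisymm
  · exact Set.iUnion_subset fun m =>
      Set.subset_iUnion (fun k => NNs C f k ⌈t * (q : ℝ) ^ k⌉₊) (m + 1)
  · exact Set.iUnion_subset fun m => (NN_chain C f q hCsl hsurj t m).trans
      (Set.subset_iUnion (fun k => NNs C f (k + 1) ⌈t * (q : ℝ) ^ (k + 1)⌉₊) m)

section FJNlemmas

variable (hCsl : ∀ (a : R) (x : M), C (a ^ q • x) = a • C x)
variable (hsurj : Function.Surjective C) (hq1 : 1 ≤ q)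

include hCsl hsurj hq1 in
lemma mulq_plus {t : ℝ} (ht : t ∈ FJNplus C q f) : (q : ℝ) * t ∈ FJNplus C q f := by
  obtain ⟨ht0, hjump⟩ := ht
  have hq0 : (0 : ℝ) < q := by exact_mod_cast hq1
  refine ⟨by positivity, fun ε hε => ?_⟩
  rw [Set.ssubset_iff_subset_ne]
  refine ⟨testSet_anti C f q (by linarith), fun heq => ?_⟩
  have h1 : (q : ℝ) * t + ε = (q : ℝ) * (t + ε / q) := by field_simp
  have h2 : C '' testSet C q f ((q : ℝ) * (t + ε / q)) = C '' testSet C q f ((q : ℝ) * t) := by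
    rw [← h1, heq]
  rw [tau_q_image C f q hCsl hsurj (by positivity), tau_q_image C f q hCsl hsurj ht0] at h2
  exact (hjump (ε / q) (by positivity)).ne h2

include hCsl hsurj hq1 in
lemma mulq_minus {t : ℝ} (ht : t ∈ FJNminus C q f) : (q : ℝ) * t ∈ FJNminus C q f := by
  obtain ⟨ht0, hjump⟩ := ht
  have hq0 : (0 : ℝ) < q := by exact_mod_cast hq1
  refine ⟨by positivity, fun ε hε hεlt => ?_⟩
  rw [Set.ssubset_iff_subset_ne]
  have hεq : ε / q < t := (div_lt_iff₀ hq0).mpr (by linarith [mul_comm t (q : ℝ)])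
  refine ⟨testSet_anti C f q (by linarith), fun heq => ?_⟩
  have h1 : (q : ℝ) * t - ε = (q : ℝ) * (t - ε / q) := by field_simp
  have h2 : C '' testSet C q f ((q : ℝ) * t) = C '' testSet C q f ((q : ℝ) * (t - ε / q)) := by
    rw [← h1, heq]
  rw [tau_q_image C f q hCsl hsurj ht0.le,
    tau_q_image C f q hCsl hsurj (by linarith : (0:ℝ) ≤ t - ε / q)] at h2
  exact (hjump (ε / q) (by positivity) hεq).ne h2

include hCsl in
lemma sub1_plus {t : ℝ} (ht : t ∈ FJNplus C q f) (h1t : 1 ≤ t) : t - 1 ∈ FJNplus C q f := by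
  obtain ⟨ht0, hjump⟩ := ht
  refine ⟨by linarith, fun ε hε => ?_⟩
  rw [Set.ssubset_iff_subset_ne]
  refine ⟨testSet_anti C f q (by linarith), fun heq => ?_⟩
  have h2 : testSet C q f (t + ε) = testSet C q f t := by
    calc testSet C q f (t + ε) = f • testSet C q f (t - 1 + ε) := by
          rw [show t + ε = (t - 1 + ε) + 1 from by ring]
          exact tau_add_one C f q hCsl (by linarith)
    _ = f • testSet C q f (t - 1) := by rw [heq]
    _ = testSet C q f t := by
          rw [← tau_add_one C f q hCsl (by linarith : (0:ℝ) ≤ t - 1),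
            show t - 1 + 1 = t from by ring]
  exact (hjump ε hε).ne h2

include hCsl in
lemma sub1_minus {t : ℝ} (ht : t ∈ FJNminus C q f) (h1t : 1 < t) : t - 1 ∈ FJNminus C q f := by
  obtain ⟨ht0, hjump⟩ := ht
  refine ⟨by linarith, fun ε hε hεlt => ?_⟩
  rw [Set.ssubset_iff_subset_ne]
  refine ⟨testSet_anti C f q (by linarith), fun heq => ?_⟩
  have h2 : testSet C q f t = testSet C q f (t - ε) := by
    calc testSet C q f t = f • testSet C q f (t - 1) := by
          have := tau_add_one C f q hCsl (show (0:ℝ) ≤ t - 1 by linarith)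
          rwa [show t - 1 + 1 = t from by ring] at this
    _ = f • testSet C q f (t - 1 - ε) := by rw [heq]
    _ = testSet C q f (t - ε) := by
          rw [← tau_add_one C f q hCsl (by linarith : (0:ℝ) ≤ t - 1 - ε),
            show t - 1 - ε + 1 = t - ε from by ring]
  exact (hjump ε hε (by linarith)).ne h2

include hCsl hsurj hq1 in
lemma powmul_plus {t : ℝ} (ht : t ∈ FJNplus C q f) (k : ℕ) :
    (q : ℝ) ^ k * t ∈ FJNplus C q f := by
  induction k with
  | zero => simpa using ht
  | succ k ih =>
    have := mulq_plus C f q hCsl hsurj hq1 ih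
    rwa [show (q : ℝ) * ((q : ℝ) ^ k * t) = (q : ℝ) ^ (k + 1) * t from by ring] at this

include hCsl hsurj hq1 in
lemma powmul_minus {t : ℝ} (ht : t ∈ FJNminus C q f) (k : ℕ) :
    (q : ℝ) ^ k * t ∈ FJNminus C q f := by
  induction k with
  | zero => simpa using ht
  | succ k ih =>
    have := mulq_minus C f q hCsl hsurj hq1 ih
    rwa [show (q : ℝ) * ((q : ℝ) ^ k * t) = (q : ℝ) ^ (k + 1) * t from by ring] at this

include hCsl in
lemma subnat_plus (j : ℕ) {s : ℝ} (hs : s ∈ FJNplus C q f) (hj : (j : ℝ) ≤ s) :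
    s - j ∈ FJNplus C q f := by
  induction j with
  | zero => simpa using hs
  | succ j ih =>
    have hj' : (j : ℝ) ≤ s := by push_cast at hj ⊢; linarith
    have h1 : (1 : ℝ) ≤ s - j := by push_cast at hj; linarith
    have := sub1_plus C f q hCsl (ih hj') h1
    rwa [show s - (j : ℝ) - 1 = s - ((j + 1 : ℕ) : ℝ) from by push_cast; ring] at this

include hCsl in
lemma subnat_minus (j : ℕ) {s : ℝ} (hs : s ∈ FJNminus C q f) (hj : (j : ℝ) < s) :
    s - j ∈ FJNminus C q f := by
  induction j with
  | zero => simpa using hs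
  | succ j ih =>
    have hj' : (j : ℝ) < s := by push_cast at hj ⊢; linarith
    have h1 : (1 : ℝ) < s - j := by push_cast at hj; linarith
    have := sub1_minus C f q hCsl (ih hj') h1
    rwa [show s - (j : ℝ) - 1 = s - ((j + 1 : ℕ) : ℝ) from by push_cast; ring] at this

end FJNlemmas

lemma finite_jump_set [IsNoetherianRing R] [Module.Finite R M]
    (hCadd : ∀ x y : M, C (x + y) = C x + C y)
    (hCsl : ∀ (a : R) (x : M), C (a ^ q • x) = a • C x)
    (hsurj : Function.Surjective C) {L : ℕ}
    (hbound : ∀ m : ℕ, 1 ≤ m →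
      {n : ℕ | n < q ^ m ∧ NNs C f m n ≠ NNs C f m (n + 1)}.ncard ≤ L)
    {T : ℝ} (hT : 0 ≤ T) {S : Set ℝ} (hS : S ⊆ Set.Icc 0 T)
    (hdrop : ∀ a ∈ S, ∀ b ∈ S, a < b → testSet C q f b ≠ testSet C q f a) :
    S.Finite := by
  by_contra hfin
  have hinf : S.Infinite := hfin
  set K : ℕ := ⌈T⌉₊ + 1 with hK
  set B : ℕ := K * L with hB
  obtain ⟨F, hFS, hFfin, hFcard⟩ := hinf.exists_subset_ncard_eq (B + 2)
  have hcard : hFfin.toFinset.card = B + 2 := by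
    rw [← Set.ncard_eq_toFinset_card _ hFfin]; exact hFcard
  set e := hFfin.toFinset.orderEmbOfFin hcard with he
  have heS : ∀ i, e i ∈ S := fun i =>
    hFS (hFfin.mem_toFinset.mp (hFfin.toFinset.orderEmbOfFin_mem hcard i))
  have hpair : ∀ i : Fin (B + 1), ∃ m₀, 1 ≤ m₀ ∧ ∀ m, m₀ ≤ m →
      ∃ n, ⌈(e i.castSucc) * (q : ℝ) ^ m⌉₊ ≤ n ∧ n < ⌈(e i.succ) * (q : ℝ) ^ m⌉₊ ∧
        NNs C f m n ≠ NNs C f m (n + 1) := by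
    intro i
    have hlt : (e i.castSucc : ℝ) < e i.succ := e.strictMono Fin.castSucc_lt_succ
    have hne := hdrop _ (heS i.castSucc) _ (heS i.succ) hlt
    exact jump_exists C f q hCadd hCsl hsurj hlt.le
      (by rw [← testSet_eq, ← testSet_eq]; exact hne)
  choose m₀ hm₀1 hm₀ using hpair
  set m : ℕ := Finset.univ.sup m₀ + 1 with hm
  have hm1 : 1 ≤ m := Nat.le_add_left 1 _
  have hmge : ∀ i, m₀ i ≤ m := fun i =>
    (Finset.le_sup (Finset.mem_univ i)).trans (Nat.le_succ _)
  choose n hn1 hn2 hn3 using fun i => hm₀ i m (hmge i)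
  have hmono : StrictMono n := by
    intro i j hij
    have hfin' : (e i.succ : ℝ) ≤ e j.castSucc := by
      apply e.monotone
      rw [Fin.succ_le_castSucc_iff]
      exact hij
    calc n i < ⌈(e i.succ) * (q : ℝ) ^ m⌉₊ := hn2 i
    _ ≤ ⌈(e j.castSucc) * (q : ℝ) ^ m⌉₊ :=
        Nat.ceil_mono (mul_le_mul_of_nonneg_right hfin' (by positivity))
    _ ≤ n j := hn1 j
  have hbnd : ∀ i, n i < K * q ^ m := by
    intro i
    have h2 : (e i.succ : ℝ) ≤ T := (hS (heS i.succ)).2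
    have h3 : ⌈(e i.succ) * (q : ℝ) ^ m⌉₊ ≤ K * q ^ m := by
      rw [Nat.ceil_le]
      push_cast
      calc (e i.succ : ℝ) * (q : ℝ) ^ m ≤ T * (q : ℝ) ^ m :=
            mul_le_mul_of_nonneg_right h2 (by positivity)
      _ ≤ ((⌈T⌉₊ : ℝ) + 1) * (q : ℝ) ^ m :=
            mul_le_mul_of_nonneg_right (by linarith [Nat.le_ceil T]) (by positivity)
      _ = (K : ℝ) * (q : ℝ) ^ m := by rw [hK]; push_cast; ring
    exact lt_of_lt_of_le (hn2 i) h3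
  have hcount := nu_count C f q hCsl m L (hbound m hm1) K
  have hinj : (B + 1 : ℕ) ≤ K * L := by
    have himg : ↑(Finset.image n Finset.univ) ⊆
        {n' : ℕ | n' < K * q ^ m ∧ NNs C f m n' ≠ NNs C f m (n' + 1)} := by
      intro x hx
      simp only [Finset.coe_image, Set.mem_image, Finset.mem_coe, Finset.mem_univ] at hx
      obtain ⟨i, -, rfl⟩ := hx
      exact ⟨hbnd i, hn3 i⟩
    have hfin2 : {n' : ℕ | n' < K * q ^ m ∧ NNs C f m n' ≠ NNs C f m (n' + 1)}.Finite :=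
      (Set.finite_Iio _).subset (fun x hx => hx.1)
    calc (B + 1 : ℕ) = (Finset.image n Finset.univ).card := by
          rw [Finset.card_image_of_injective _ hmono.injective, Finset.card_univ,
            Fintype.card_fin]
    _ = (↑(Finset.image n Finset.univ) : Set ℕ).ncard := (Set.ncard_coe_finset _).symm
    _ ≤ {n' : ℕ | n' < K * q ^ m ∧ NNs C f m n' ≠ NNs C f m (n' + 1)}.ncard :=
        Set.ncard_le_ncard himg hfin2
    _ ≤ K * L := hcount
  omega

end FJNAux

theorem stmt10 {R M : Type*} [CommRing R] [AddCommGroup M] [Module R M]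
    (p : ℕ) [Fact p.Prime] [CharP R p] [IsNoetherianRing R]
    (hFF : (frobenius R p).Finite)
    (e q : ℕ) (he : 1 ≤ e) (hq : q = p ^ e)
    (C : M → M) (hCadd : ∀ x y : M, C (x + y) = C x + C y)
    (hCsl : ∀ (a : R) (x : M), C (a ^ q • x) = a • C x)
    [Module.Finite R M] (hFpure : Function.Surjective C) (f : R)
    (hbound : ∃ L : ℕ, ∀ m : ℕ, 1 ≤ m →
      {n : ℕ | n < q ^ m ∧ n ∈ nuLevel C f (Set.univ : Set M) m}.ncard ≤ L) :
    -- (1) every F-jumping exponent is rational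
    (∀ t ∈ FJNplus C q f ∪ FJNminus C q f, ∃ r : ℚ, t = (r : ℝ)) ∧
    -- (2) discreteness: only finitely many F-jumping exponents in any `[0, T]`
    (∀ T : ℝ, 0 ≤ T →
      ((FJNplus C q f ∪ FJNminus C q f) ∩ Set.Icc 0 T).Finite) := by
  obtain ⟨L, hL⟩ := hbound
  have hq2 : 2 ≤ q := by
    subst hq
    calc 2 ≤ p := (Fact.out : p.Prime).two_le
    _ ≤ p ^ e := Nat.le_self_pow (by omega) p
  have hq1 : 1 ≤ q := by omega
  have hbound' : ∀ m : ℕ, 1 ≤ m →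
      {n : ℕ | n < q ^ m ∧ FJNAux.NNs C f m n ≠ FJNAux.NNs C f m (n + 1)}.ncard ≤ L := hL
  have part2 : ∀ T : ℝ, 0 ≤ T →
      ((FJNplus C q f ∪ FJNminus C q f) ∩ Set.Icc 0 T).Finite := by
    intro T hT
    rw [Set.union_inter_distrib_right]
    have hplus : (FJNplus C q f ∩ Set.Icc 0 T).Finite := by
      refine FJNAux.finite_jump_set C f q hCadd hCsl hFpure hbound' hT
        Set.inter_subset_right ?_
      intro a ha b hb hab
      have h := ha.1.2 (b - a) (by linarith)
      rw [show a + (b - a) = b from by ring] at h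
      exact h.ne
    have hminus : (FJNminus C q f ∩ Set.Icc 0 T).Finite := by
      refine FJNAux.finite_jump_set C f q hCadd hCsl hFpure hbound' hT
        Set.inter_subset_right ?_
      intro a ha b hb hab
      have ha0 : 0 < a := ha.1.1
      have h := hb.1.2 (b - a) (by linarith) (by linarith)
      rw [show b - (b - a) = a from by ring] at h
      exact h.ne
    exact hplus.union hminus
  refine ⟨?_, part2⟩
  intro t ht
  by_contra hrat
  push_neg at hrat
  have ht0 : 0 ≤ t := by
    rcases ht with h | h
    · exact h.1
    · exact h.1.le
  set u : ℕ → ℝ := fun k => (q : ℝ) ^ k * t - (⌊(q : ℝ) ^ k * t⌋₊ : ℝ) with hu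
  have hpos : ∀ k : ℕ, (0 : ℝ) ≤ (q : ℝ) ^ k * t := fun k => by positivity
  have hfl : ∀ k : ℕ, ((⌊(q : ℝ) ^ k * t⌋₊ : ℝ)) < (q : ℝ) ^ k * t := by
    intro k
    rcases lt_or_eq_of_le (Nat.floor_le (hpos k)) with h | h
    · exact h
    · exfalso
      apply hrat ((⌊(q : ℝ) ^ k * t⌋₊ : ℚ) / (q : ℚ) ^ k)
      have hqk : ((q : ℝ)) ^ k ≠ 0 := by positivity
      push_cast
      rw [eq_div_iff hqk]
      linear_combination -h
  have humem : ∀ k, u k ∈ FJNplus C q f ∪ FJNminus C q f := by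
    intro k
    rcases ht with h | h
    · exact Or.inl (FJNAux.subnat_plus C f q hCsl (⌊(q : ℝ) ^ k * t⌋₊)
        (FJNAux.powmul_plus C f q hCsl hFpure hq1 h k) (Nat.floor_le (hpos k)))
    · exact Or.inr (FJNAux.subnat_minus C f q hCsl (⌊(q : ℝ) ^ k * t⌋₊)
        (FJNAux.powmul_minus C f q hCsl hFpure hq1 h k) (hfl k))
  have hu01 : ∀ k, u k ∈ Set.Icc (0 : ℝ) 1 := by
    intro k
    constructor
    · have := Nat.floor_le (hpos k)
      simp only [hu]
      linarith
    · have := Nat.lt_floor_add_one ((q : ℝ) ^ k * t)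
      simp only [hu]
      linarith
  have huinj : Function.Injective u := by
    have key : ∀ j k : ℕ, j < k → u j ≠ u k := by
      intro j k hjk heq
      have hpow : (q : ℝ) ^ j < (q : ℝ) ^ k := by
        have h1 : (1 : ℝ) < q := by exact_mod_cast hq2
        exact pow_lt_pow_right₀ h1 hjk
      apply hrat (((⌊(q : ℝ) ^ k * t⌋₊ : ℚ) - (⌊(q : ℝ) ^ j * t⌋₊ : ℚ)) /
        ((q : ℚ) ^ k - (q : ℚ) ^ j))
      have hden : ((q : ℝ)) ^ k - (q : ℝ) ^ j ≠ 0 := by linarith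
      simp only [hu] at heq
      push_cast
      rw [eq_div_iff hden]
      linear_combination -heq
    intro j k hjk
    by_contra hne
    rcases Nat.lt_trichotomy j k with h | h | h
    · exact key j k h hjk
    · exact hne h
    · exact key k j h hjk.symm
  have hfin1 := part2 1 zero_le_one
  exact Set.infinite_range_of_injective huinj
    (hfin1.subset (by rintro x ⟨k, rfl⟩; exact ⟨humem k, hu01 k⟩))
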